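/- Let d1 ≥ 0, d2 > 0, y⋆ > 0 and let x1, x2, u : ℝ → ℝ be differentiable functions satisfying the scaled Boost converter model, with u(τ) ≠ 0 for all τ and x2(τ) = y⋆ for all τ. Then u satisfies the zero-dynamics differential equation u'(τ) = (u(τ)/d2)·(u(τ)² - u(τ)/y⋆ + d1·d2) for all τ. -/

import Mathlib

/-- zero dynamics of the scaled Boost converter with respect to the
constant output x2 = y⋆. -/
theorem boost_zero_dynamics
    (d1 d2 ystar : ℝ) (hd1 : 0 ≤ d1) (hd2 : 0 < d2) (hy : 0 < ystar)
    (x1 x2 u : ℝ → ℝ)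
    (hx1 : Differentiable ℝ x1) (hx2 : Differentiable ℝ x2)
    (hu : Differentiable ℝ u)
    (heq1 : ∀ τ, deriv x1 τ = -d1 * x1 τ + 1 - x2 τ * u τ)
    (heq2 : ∀ τ, deriv x2 τ = -d2 * x2 τ + x1 τ * u τ)
    (hune : ∀ τ, u τ ≠ 0)
    (hx2c : ∀ τ, x2 τ = ystar) :
    ∀ τ, deriv u τ = (u τ / d2) * (u τ ^ 2 - u τ / ystar + d1 * d2) := by
  have hx2fun : x2 = fun _ => ystar := funext hx2c
  have hderiv2 : ∀ τ, deriv x2 τ = 0 := by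
    intro τ; rw [hx2fun]; simp
  have hx1eq : ∀ τ, x1 τ = d2 * ystar / u τ := by
    intro τ
    have h := heq2 τ
    rw [hderiv2 τ, hx2c τ] at h
    rw [eq_div_iff (hune τ)]
    linarith
  have hx1fun : x1 = fun t => d2 * ystar / u t := funext hx1eq
  intro τ
  have hd : HasDerivAt (fun t => d2 * ystar / u t)
      ((0 * u τ - (d2 * ystar) * deriv u τ) / (u τ) ^ 2) τ := by
    exact (hasDerivAt_const τ (d2 * ystar)).div ((hu τ).hasDerivAt) (hune τ)
  have hderiv1 : deriv x1 τ = (0 * u τ - (d2 * ystar) * deriv u τ) / (u τ) ^ 2 := by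
    rw [hx1fun]; exact hd.deriv
  have h1 := heq1 τ
  rw [hderiv1, hx1eq τ, hx2c τ] at h1
  have hu0 := hune τ
  field_simp at h1 ⊢
  apply mul_left_cancel₀ hu0
  linear_combination -(u τ) * h1
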